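/- arXiv:2008.07461 — 6 statements merged into one kernel-verified Lean document; each statement's English description precedes it below -/
import Mathlib

section
/- Let E be a finite-dimensional real normed vector space, F a real normed vector space, z₀ ∈ E, and let g : ℝ × ℝ × E → F be a smooth (C^∞) map on a neighborhood of (0,0,z₀) such that g(0,s,z) does not depend on s. Define f(t,z) = g(t, t·log|t|, z) for t ≠ 0 and f(0,z) = g(0,0,z). Then f is of class C¹ on a neighborhood of (0,z₀) in ℝ × E, and for every z near z₀ its Fréchet derivative at (0,z) is the linear map (τ,ζ) ↦ τ·(∂g/∂t)(0,0,z) + D_z g(0,0,z)(ζ), where D_z g denotes the partial Fréchet derivative of g with respect to its E-variable. -/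
open Filter Metric Set

-- η(t) = t log t, continuous with η 0 = 0
private lemma eta_cont : Continuous (fun t : ℝ => t * Real.log t) :=
  Real.continuous_mul_log

private lemma phi_tendsto : Filter.Tendsto (fun t : ℝ => |t| * Real.log t ^ 2)
    (nhds 0) (nhds 0) := by
  have heq : (fun t : ℝ => |t| * Real.log t ^ 2)
      = fun t : ℝ => (2 * (Real.sqrt |t| * Real.log (Real.sqrt |t|)))^2 := by
    funext t
    have h1 : Real.log (Real.sqrt |t|) = Real.log |t| / 2 := Real.log_sqrt (abs_nonneg t)
    have h2 : Real.sqrt |t| ^ 2 = |t| := Real.sq_sqrt (abs_nonneg t)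
    have h3 : Real.log |t| = Real.log t := Real.log_abs t
    rw [h1, h3]
    ring_nf
    rw [mul_comm]
    ring_nf
    rw [← h3]
    nlinarith [h2]
  rw [heq]
  have hc : Continuous fun t : ℝ =>
      (2 * (Real.sqrt |t| * Real.log (Real.sqrt |t|)))^2 := by
    apply Continuous.pow
    exact continuous_const.mul (eta_cont.comp (Real.continuous_sqrt.comp continuous_abs))
  have := hc.tendsto 0
  simpa using this

private lemma arith_aux (K a b ph n c : ℝ) (hK : 0 ≤ K) (ha : 0 ≤ a) (hb : 0 ≤ b)
    (hph : 0 ≤ ph) (hn : 0 ≤ n) (hnab : n ≤ a + b) (hbsq : b * b ≤ a * ph)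
    (haD : a ≤ c / (4 * (K + 1))) (hphD : ph ≤ c / (4 * (K + 1))) (hc : 0 < c) :
    K * n * n ≤ c * a := by
  have hK1 : (0:ℝ) < K + 1 := by linarith
  have hDc : 4 * (K + 1) * (c / (4 * (K + 1))) = c := by field_simp
  set D := c / (4 * (K + 1)) with hD
  have hDpos : 0 < D := by positivity
  have e1 : n * n ≤ (a + b) * (a + b) := mul_le_mul hnab hnab hn (by linarith)
  have e2 : (a + b) * (a + b) ≤ 2 * (a * a) + 2 * (b * b) := by nlinarith [sq_nonneg (a - b)]
  have hA' := mul_le_mul_of_nonneg_left (e1.trans e2) hK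
  have hB' := mul_le_mul_of_nonneg_left hbsq hK
  have hC' := mul_le_mul_of_nonneg_left hphD (mul_nonneg hK ha)
  have hD' := mul_le_mul_of_nonneg_left haD (mul_nonneg hK ha)
  have hE' : 0 ≤ D * a := mul_nonneg hDpos.le ha
  rw [← hDc]
  nlinarith [hA', hB', hC', hD', hE']

set_option maxHeartbeats 1000000 in
theorem stmt0
    {E F : Type*} [NormedAddCommGroup E] [NormedSpace ℝ E] [FiniteDimensional ℝ E]
    [NormedAddCommGroup F] [NormedSpace ℝ F]
    (z₀ : E) (g : ℝ × ℝ × E → F)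
    (U : Set (ℝ × ℝ × E)) (hU : IsOpen U) (hmem : ((0:ℝ), (0:ℝ), z₀) ∈ U)
    (hg : ContDiffOn ℝ (⊤ : ℕ∞) g U)
    (hindep : ∀ s s' : ℝ, ∀ z : E, g (0, s, z) = g (0, s', z))
    (f : ℝ × E → F)
    (hf0 : ∀ z : E, f (0, z) = g (0, 0, z))
    (hf : ∀ t : ℝ, t ≠ 0 → ∀ z : E, f (t, z) = g (t, t * Real.log |t|, z)) :
    ∃ V : Set (ℝ × E), IsOpen V ∧ ((0:ℝ), z₀) ∈ V ∧ ContDiffOn ℝ 1 f V ∧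
      ∀ z : E, ((0:ℝ), z) ∈ V →
        ∀ (τ : ℝ) (ζ : E),
          fderiv ℝ f (0, z) (τ, ζ)
            = τ • deriv (fun t : ℝ => g (t, 0, z)) 0
              + fderiv ℝ (fun w : E => g (0, 0, w)) z ζ := by
  classical
  set w₀ : ℝ × ℝ × E := ((0:ℝ), (0:ℝ), z₀) with hw₀
  set η : ℝ → ℝ := fun t => t * Real.log t with hη
  have hη0 : η 0 = 0 := by simp [hη]
  set θ : ℝ × E → ℝ × ℝ × E := fun p => (p.1, η p.1, p.2) with hθ
  have hθc : Continuous θ := by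
    exact continuous_fst.prodMk ((eta_cont.comp continuous_fst).prodMk continuous_snd)
  have hfθ : ∀ p : ℝ × E, f p = g (θ p) := by
    rintro ⟨t, z⟩
    by_cases hp : t = 0
    · subst hp
      rw [hf0 z]
      show g (0, 0, z) = g (0, η 0, z)
      rw [hη0]
    · rw [hf t hp z]
      show g (t, t * Real.log |t|, z) = g (t, η t, z)
      rw [hη]
      simp [Real.log_abs]
  set Dg : ℝ × ℝ × E → (ℝ × ℝ × E →L[ℝ] F) := fderiv ℝ g with hDg
  have htop : (1 + 1 : WithTop ℕ∞) ≤ ((⊤ : ℕ∞) : WithTop ℕ∞) := by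
    have h : (1 + 1 : WithTop ℕ∞) = ((1 + 1 : ℕ∞) : WithTop ℕ∞) := by norm_cast
    rw [h, WithTop.coe_le_coe]
    exact le_top
  have hDgC1 : ContDiffOn ℝ 1 Dg U := hg.fderiv_of_isOpen hU htop
  have hDgcont : ContinuousOn Dg U := hDgC1.continuousOn
  -- Lipschitz bound for Dg near w₀
  obtain ⟨K, s, hs, hKs⟩ : ∃ K : NNReal, ∃ s ∈ nhds w₀, LipschitzOnWith K Dg s := by
    have : ContDiffAt ℝ 1 Dg w₀ := hDgC1.contDiffAt (hU.mem_nhds hmem)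
    exact this.exists_lipschitzOnWith
  obtain ⟨ε, hε, hball⟩ : ∃ ε > 0, ball w₀ ε ⊆ s ∩ U := by
    rcases Metric.mem_nhds_iff.1 (Filter.inter_mem hs (hU.mem_nhds hmem)) with ⟨ε, hε, h⟩
    exact ⟨ε, hε, h⟩
  have hballU : ball w₀ ε ⊆ U := fun x hx => (hball hx).2
  have hballs : ball w₀ ε ⊆ s := fun x hx => (hball hx).1
  -- vanishing of ∂₂ g on {t = 0}
  have h2 : ∀ w ∈ ball w₀ ε, w.1 = 0 → ∀ σ : ℝ, Dg w (0, σ, 0) = 0 := by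
    rintro ⟨a, b, c⟩ hw ha σ
    simp only at ha
    subst ha
    have hdiff : HasFDerivAt g (Dg (0, b, c)) (0, b, c) :=
      ((hg.contDiffAt (hU.mem_nhds (hballU hw))).differentiableAt (by simp)).hasFDerivAt
    have hcurve : HasDerivAt (fun σ' : ℝ => ((0:ℝ), σ', c)) ((0:ℝ), (1:ℝ), (0:E)) b := by
      exact (hasDerivAt_const b (0:ℝ)).prodMk ((hasDerivAt_id b).prodMk (hasDerivAt_const b c))
    have hcomp : HasDerivAt (fun σ' : ℝ => g (0, σ', c)) (Dg (0, b, c) (0, 1, 0)) b :=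
      hdiff.comp_hasDerivAt b hcurve
    have hconst : HasDerivAt (fun σ' : ℝ => g (0, σ', c)) 0 b := by
      have : (fun σ' : ℝ => g (0, σ', c)) = fun _ => g (0, 0, c) := by
        funext σ'
        exact hindep σ' 0 c
      rw [this]
      exact hasDerivAt_const b _
    have hzero : Dg (0, b, c) (0, 1, 0) = 0 := hcomp.unique hconst
    have : ((0:ℝ), σ, (0:E)) = σ • ((0:ℝ), (1:ℝ), (0:E)) := by
      simp [Prod.smul_def]
    rw [this, map_smul, hzero, smul_zero]
  -- quadratic Taylor estimate
  have hdiffat : ∀ w ∈ ball w₀ ε, HasFDerivAt g (Dg w) w := by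
    intro w hw
    exact ((hg.contDiffAt (hU.mem_nhds (hballU hw))).differentiableAt
      (by simp)).hasFDerivAt
  have hquad : ∀ w ∈ ball w₀ ε, ∀ w' ∈ ball w₀ ε,
      ‖g w' - g w - Dg w (w' - w)‖ ≤ K * ‖w' - w‖ * ‖w' - w‖ := by
    intro w hw w' hw'
    have hseg : segment ℝ w w' ⊆ ball w₀ ε := (convex_ball w₀ ε).segment_subset hw hw'
    have hder : ∀ x ∈ segment ℝ w w', HasFDerivWithinAt g (Dg x) (segment ℝ w w') x :=
      fun x hx => (hdiffat x (hseg hx)).hasFDerivWithinAt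
    have hbound : ∀ x ∈ segment ℝ w w', ‖Dg x - Dg w‖ ≤ K * ‖w' - w‖ := by
      rintro x hx
      have hlip := hKs.norm_sub_le (hballs (hseg hx)) (hballs hw)
      refine hlip.trans ?_
      have hxw : ‖x - w‖ ≤ ‖w' - w‖ := by
        rcases hx with ⟨a, b, ha, hb, hab, rfl⟩
        have : a • w + b • w' - w = b • (w' - w) := by
          have : a = 1 - b := by linarith
          rw [this]
          module
        rw [this, norm_smul]
        calc ‖b‖ * ‖w' - w‖ ≤ 1 * ‖w' - w‖ := by
              apply mul_le_mul_of_nonneg_right _ (norm_nonneg _)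
              rw [Real.norm_eq_abs, abs_of_nonneg hb]; linarith
          _ = ‖w' - w‖ := one_mul _
      exact mul_le_mul_of_nonneg_left hxw K.2
    have := Convex.norm_image_sub_le_of_norm_hasFDerivWithin_le' hder hbound
      (convex_segment w w') (left_mem_segment ℝ w w') (right_mem_segment ℝ w w')
    linarith [this]
  -- linear maps
  set J : ℝ × E →L[ℝ] ℝ × ℝ × E :=
    (ContinuousLinearMap.fst ℝ ℝ E).prod
      ((0 : ℝ × E →L[ℝ] ℝ).prod (ContinuousLinearMap.snd ℝ ℝ E)) with hJ
  set e₂ : ℝ × E →L[ℝ] ℝ × ℝ × E :=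
    (0 : ℝ × E →L[ℝ] ℝ).prod
      ((ContinuousLinearMap.fst ℝ ℝ E).prod (0 : ℝ × E →L[ℝ] E)) with he₂
  have hJapp : ∀ v : ℝ × E, J v = (v.1, 0, v.2) := fun v => rfl
  have he₂app : ∀ v : ℝ × E, e₂ v = (0, v.1, 0) := fun v => rfl
  set ℓ : ℝ → ℝ := fun t => if t = 0 then 0 else Real.log t + 1 with hℓ
  set L : ℝ × E → (ℝ × E →L[ℝ] F) := fun p => (Dg (θ p)).comp (J + ℓ p.1 • e₂) with hL
  -- the neighborhood V
  set V : Set (ℝ × E) := {p | |p.1| < ε ∧ |η p.1| < ε ∧ ‖p.2 - z₀‖ < ε} with hV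
  have hVopen : IsOpen V := by
    have h1 : IsOpen {p : ℝ × E | |p.1| < ε} :=
      isOpen_lt (continuous_abs.comp continuous_fst) continuous_const
    have h2 : IsOpen {p : ℝ × E | |η p.1| < ε} :=
      isOpen_lt (continuous_abs.comp (eta_cont.comp continuous_fst)) continuous_const
    have h3 : IsOpen {p : ℝ × E | ‖p.2 - z₀‖ < ε} :=
      isOpen_lt (continuous_norm.comp (continuous_snd.sub continuous_const)) continuous_const
    exact h1.inter (h2.inter h3)
  have hV0 : ((0:ℝ), z₀) ∈ V := by
    refine ⟨by simpa using hε, ?_, by simpa using hε⟩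
    simp [hη0, hε]
  have hmemball : ∀ a b : ℝ, ∀ c : E, |a| < ε → |b| < ε → ‖c - z₀‖ < ε →
      ((a, b, c) : ℝ × ℝ × E) ∈ ball w₀ ε := by
    intro a b c ha hb hc
    rw [mem_ball, hw₀, Prod.dist_eq, Prod.dist_eq]
    simp only [Real.dist_eq, dist_eq_norm, sub_zero]
    exact max_lt ha (max_lt hb hc)
  have hθV : ∀ p ∈ V, θ p ∈ ball w₀ ε := fun p hp => hmemball _ _ _ hp.1 hp.2.1 hp.2.2
  have h0ηV : ∀ p ∈ V, ((0:ℝ), η p.1, p.2) ∈ ball w₀ ε := fun p hp =>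
    hmemball _ _ _ (by simpa using hε) hp.2.1 hp.2.2
  have h00V : ∀ p ∈ V, ((0:ℝ), (0:ℝ), p.2) ∈ ball w₀ ε := fun p hp =>
    hmemball _ _ _ (by simpa using hε) (by simpa using hε) hp.2.2
  -- f has derivative L p at every p ∈ V
  have hder : ∀ p ∈ V, HasFDerivAt f (L p) p := by
    rintro ⟨t, z⟩ hp
    by_cases ht : t = 0
    · subst ht
      rw [hasFDerivAt_iff_isLittleO_nhds_zero, Asymptotics.isLittleO_iff]
      intro c hc
      set D : ℝ := c / (4 * ((K:ℝ) + 1)) with hD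
      have hKpos : (0:ℝ) < (K:ℝ) + 1 := by positivity
      have hDpos : 0 < D := by positivity
      have hDc : 4 * ((K:ℝ) + 1) * D = c := by
        rw [hD]
        field_simp
      have h1 : ∀ᶠ h : ℝ × E in nhds 0, ((0:ℝ), z) + h ∈ V := by
        have hct : Filter.Tendsto (fun h : ℝ × E => ((0:ℝ), z) + h) (nhds 0) (nhds ((0:ℝ), z)) := by
          have := (continuous_const.add continuous_id :
            Continuous fun h : ℝ × E => ((0:ℝ), z) + h).tendsto 0
          simpa only [Pi.add_def, add_zero] using this
        exact hct.eventually (hVopen.mem_nhds hp)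
      have h2' : ∀ᶠ h : ℝ × E in nhds 0, ‖h‖ < D := by
        have : Filter.Tendsto (fun h : ℝ × E => ‖h‖) (nhds 0) (nhds 0) := by
          simpa using (continuous_norm.tendsto (0 : ℝ × E))
        exact this.eventually_lt_const hDpos
      have h3' : ∀ᶠ h : ℝ × E in nhds 0, |h.1| * Real.log h.1 ^ 2 < D := by
        have : Filter.Tendsto (fun h : ℝ × E => |h.1| * Real.log h.1 ^ 2)
            (nhds 0) (nhds 0) := by
          exact phi_tendsto.comp (by simpa using (continuous_fst.tendsto (0 : ℝ × E)))
        exact this.eventually_lt_const hDpos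
      filter_upwards [h1, h2', h3'] with h hVm hn hφ
      set w : ℝ × ℝ × E := ((0:ℝ), (0:ℝ), z) with hwdef
      set w' : ℝ × ℝ × E := (h.1, η h.1, z + h.2) with hw'def
      have hsum : ((0:ℝ), z) + h = (h.1, z + h.2) := by
        cases h
        simp [Prod.ext_iff]
      have hA : f (((0:ℝ), z) + h) = g w' := by
        rw [hsum, hfθ]
      have hB : f ((0:ℝ), z) = g w := by
        rw [hfθ]
        show g (0, η 0, z) = g w
        rw [hη0]
      have hC : L ((0:ℝ), z) h = Dg w ((h.1, 0, h.2) : ℝ × ℝ × E) := by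
        simp only [hL]
        show Dg (0, η 0, z) ((J + ℓ 0 • e₂) h) = _
        rw [hη0]
        have : (J + ℓ 0 • e₂) h = ((h.1, 0, h.2) : ℝ × ℝ × E) := by
          simp [hℓ, hJapp, he₂app]
        rw [this]
      have hwball : w ∈ ball w₀ ε := h00V _ hp
      have hw'ball : w' ∈ ball w₀ ε := by
        have := hθV _ hVm
        rw [hsum] at this
        exact this
      have hvan : Dg w ((0, η h.1, 0) : ℝ × ℝ × E) = 0 := h2 w hwball rfl (η h.1)
      have hsplit : Dg w (w' - w) = Dg w ((h.1, 0, h.2) : ℝ × ℝ × E) := by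
        have hsub : w' - w = ((h.1, η h.1, h.2) : ℝ × ℝ × E) := by
          simp [hwdef, hw'def, Prod.ext_iff]
        have hadd : ((h.1, η h.1, h.2) : ℝ × ℝ × E)
            = ((h.1, 0, h.2) : ℝ × ℝ × E) + ((0, η h.1, 0) : ℝ × ℝ × E) := by
          simp [Prod.ext_iff]
        rw [hsub, hadd, map_add, hvan, add_zero]
      have hq := hquad w hwball w' hw'ball
      rw [hsplit] at hq
      rw [hA, hB, hC]
      -- norm estimates
      have hnorm1 : ‖w' - w‖ ≤ ‖h‖ + |η h.1| := by
        have hsub : w' - w = ((h.1, η h.1, h.2) : ℝ × ℝ × E) := by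
          simp [hwdef, hw'def, Prod.ext_iff]
        rw [hsub]
        rw [Prod.norm_def, Prod.norm_def]
        have hh1 : ‖h.1‖ ≤ ‖h‖ := norm_fst_le h
        have hh2 : ‖h.2‖ ≤ ‖h‖ := norm_snd_le h
        have hb : (0:ℝ) ≤ |η h.1| := abs_nonneg _
        simp only [Real.norm_eq_abs]
        apply max_le
        · exact le_trans hh1 (by linarith [norm_nonneg h])
        · apply max_le
          · linarith [norm_nonneg h]
          · linarith [hh2]
      have hbsq : |η h.1| * |η h.1| ≤ ‖h‖ * (|h.1| * Real.log h.1 ^ 2) := by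
        have heq1 : |η h.1| * |η h.1| = |h.1| * (|h.1| * Real.log h.1 ^ 2) := by
          rw [hη]
          show |h.1 * Real.log h.1| * |h.1 * Real.log h.1| = _
          rw [abs_mul_abs_self]
          rw [show |h.1| * (|h.1| * Real.log h.1 ^ 2)
              = |h.1| * |h.1| * Real.log h.1 ^ 2 by ring, abs_mul_abs_self]
          ring
        rw [heq1]
        apply mul_le_mul_of_nonneg_right _ (by positivity)
        calc |h.1| = ‖h.1‖ := (Real.norm_eq_abs h.1).symm
          _ ≤ ‖h‖ := norm_fst_le h
      have hfin : K * ‖w' - w‖ * ‖w' - w‖ ≤ c * ‖h‖ :=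
        arith_aux K ‖h‖ |η h.1| (|h.1| * Real.log h.1 ^ 2) ‖w' - w‖ c
          K.2 (norm_nonneg h) (abs_nonneg _) (by positivity) (norm_nonneg _)
          hnorm1 hbsq (le_of_lt hn) (le_of_lt hφ) hc
      calc ‖g w' - g w - Dg w ((h.1, 0, h.2) : ℝ × ℝ × E)‖
          ≤ K * ‖w' - w‖ * ‖w' - w‖ := hq
        _ ≤ c * ‖h‖ := hfin
    · -- t ≠ 0
      have hηd : HasDerivAt η (Real.log t + 1) t := by
        have h1 : HasDerivAt (fun x : ℝ => x * Real.log x) (1 * Real.log t + t * t⁻¹) t :=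
          (hasDerivAt_id t).mul (Real.hasDerivAt_log ht)
        have : 1 * Real.log t + t * t⁻¹ = Real.log t + 1 := by
          field_simp
        rw [hη]
        rw [← this]
        exact h1
      have hθd : HasFDerivAt θ (J + ℓ t • e₂) (t, z) := by
        have h1 : HasFDerivAt (fun p : ℝ × E => η p.1)
            ((Real.log t + 1) • ContinuousLinearMap.fst ℝ ℝ E) (t, z) :=
          hηd.comp_hasFDerivAt (f := Prod.fst) (t, z) (hasFDerivAt_fst (𝕜 := ℝ) (p := (t, z)))
        have h2' : HasFDerivAt θ ((ContinuousLinearMap.fst ℝ ℝ E).prod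
            ((((Real.log t + 1)) • ContinuousLinearMap.fst ℝ ℝ E).prod
              (ContinuousLinearMap.snd ℝ ℝ E))) (t, z) :=
          hasFDerivAt_fst.prodMk (h1.prodMk hasFDerivAt_snd)
        have heq : J + ℓ t • e₂ = (ContinuousLinearMap.fst ℝ ℝ E).prod
            ((((Real.log t + 1)) • ContinuousLinearMap.fst ℝ ℝ E).prod
              (ContinuousLinearMap.snd ℝ ℝ E)) := by
          refine ContinuousLinearMap.ext fun v => ?_
          simp [hJ, he₂, hℓ, ht, Prod.ext_iff]
        rw [heq]
        exact h2'
      have hgd : HasFDerivAt g (Dg (θ (t, z))) (θ (t, z)) := hdiffat _ (hθV _ hp)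
      have hcomp := hgd.comp (t, z) hθd
      exact hcomp.congr_of_eventuallyEq (Filter.Eventually.of_forall hfθ)
  -- continuity of L on V
  have he₂norm : ‖e₂‖ ≤ 1 := by
    refine ContinuousLinearMap.opNorm_le_bound _ zero_le_one fun v => ?_
    rw [he₂app, one_mul]
    rw [Prod.norm_def, Prod.norm_def]
    simp only [norm_zero, Real.norm_eq_abs]
    apply max_le (norm_nonneg v)
    apply max_le _ (norm_nonneg v)
    calc |v.1| = ‖v.1‖ := rfl
      _ ≤ ‖v‖ := norm_fst_le v
  have hcompnorm : ∀ q ∈ V, ‖(Dg (θ q)).comp e₂‖ ≤ (K:ℝ) * |q.1| := by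
    intro q hq
    have hzero : (Dg ((0:ℝ), η q.1, q.2)).comp e₂ = 0 := by
      refine ContinuousLinearMap.ext fun v => ?_
      show Dg ((0:ℝ), η q.1, q.2) (e₂ v) = 0
      rw [he₂app]
      exact h2 _ (h0ηV q hq) rfl v.1
    have : (Dg (θ q)).comp e₂ = (Dg (θ q) - Dg ((0:ℝ), η q.1, q.2)).comp e₂ := by
      rw [ContinuousLinearMap.sub_comp, hzero, sub_zero]
    rw [this]
    calc ‖(Dg (θ q) - Dg ((0:ℝ), η q.1, q.2)).comp e₂‖
        ≤ ‖Dg (θ q) - Dg ((0:ℝ), η q.1, q.2)‖ * ‖e₂‖ := ContinuousLinearMap.opNorm_comp_le _ _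
      _ ≤ ‖Dg (θ q) - Dg ((0:ℝ), η q.1, q.2)‖ * 1 :=
          mul_le_mul_of_nonneg_left he₂norm (norm_nonneg _)
      _ = ‖Dg (θ q) - Dg ((0:ℝ), η q.1, q.2)‖ := mul_one _
      _ ≤ (K:ℝ) * |q.1| := by
          have hlip := hKs.norm_sub_le (hballs (hθV q hq)) (hballs (h0ηV q hq))
          refine hlip.trans ?_
          have : θ q - ((0:ℝ), η q.1, q.2) = ((q.1, 0, 0) : ℝ × ℝ × E) := by
            simp [hθ, Prod.ext_iff]
          rw [this]
          apply mul_le_mul_of_nonneg_left _ K.2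
          rw [Prod.norm_def, Prod.norm_def]
          simp [Real.norm_eq_abs, abs_nonneg]
  have hsmulbound : ∀ q ∈ V, ‖ℓ q.1 • ((Dg (θ q)).comp e₂)‖ ≤ (K:ℝ) * (|η q.1| + |q.1|) := by
    intro q hq
    rw [norm_smul (ℓ q.1) ((Dg (θ q)).comp e₂)]
    have h1 : |ℓ q.1| * ‖(Dg (θ q)).comp e₂‖ ≤ |ℓ q.1| * ((K:ℝ) * |q.1|) :=
      mul_le_mul_of_nonneg_left (hcompnorm q hq) (abs_nonneg _)
    refine le_trans (by simpa [Real.norm_eq_abs] using h1) ?_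
    have h2' : |ℓ q.1| * |q.1| ≤ |η q.1| + |q.1| := by
      by_cases hq1 : q.1 = 0
      · simp [hq1, hℓ]
      · rw [← abs_mul]
        have : ℓ q.1 * q.1 = η q.1 + q.1 := by
          simp only [hℓ, if_neg hq1, hη]
          ring
        rw [this]
        exact abs_add_le _ _
    calc |ℓ q.1| * ((K:ℝ) * |q.1|) = (K:ℝ) * (|ℓ q.1| * |q.1|) := by ring
      _ ≤ (K:ℝ) * (|η q.1| + |q.1|) := mul_le_mul_of_nonneg_left h2' K.2
  have hLsum : L = fun p => (Dg (θ p)).comp J + ℓ p.1 • ((Dg (θ p)).comp e₂) := by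
    funext p
    simp only [hL]
    rw [ContinuousLinearMap.comp_add]
    congr 1
    refine ContinuousLinearMap.ext fun v => ?_
    simp
  have hDgθ : ContinuousOn (fun p : ℝ × E => Dg (θ p)) V :=
    hDgcont.comp hθc.continuousOn fun p hp => hballU (hθV p hp)
  have hG1 : ContinuousOn (fun p : ℝ × E => (Dg (θ p)).comp J) V :=
    hDgθ.clm_comp continuousOn_const
  have hG2 : ContinuousOn (fun p : ℝ × E => ℓ p.1 • ((Dg (θ p)).comp e₂)) V := by
    intro p hp
    by_cases hp1 : p.1 = 0
    · -- continuity at t = 0 via squeeze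
      have hval : ℓ p.1 • ((Dg (θ p)).comp e₂) = 0 := by
        rw [show ℓ p.1 = 0 by simp [hℓ, hp1], zero_smul]
      have hGc : Continuous fun q : ℝ × E => (K:ℝ) * (|η q.1| + |q.1|) := by
        apply continuous_const.mul
        exact ((continuous_abs.comp (eta_cont.comp continuous_fst)).add
          (continuous_abs.comp continuous_fst))
      have hGt : Filter.Tendsto (fun q : ℝ × E => (K:ℝ) * (|η q.1| + |q.1|))
          (nhdsWithin p V) (nhds 0) := by
        have := (hGc.tendsto p).mono_left (nhdsWithin_le_nhds (s := V))
        have hval2 : (K:ℝ) * (|η p.1| + |p.1|) = 0 := by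
          simp [hp1, hη0]
        rw [hval2] at this
        exact this
      have key : Filter.Tendsto (fun q : ℝ × E => ℓ q.1 • ((Dg (θ q)).comp e₂))
          (nhdsWithin p V) (nhds 0) := by
        refine squeeze_zero_norm' ?_ hGt
        filter_upwards [self_mem_nhdsWithin] with q hq
        exact hsmulbound q hq
      unfold ContinuousWithinAt
      convert key using 2
      all_goals simp [hℓ, hp1]
    · -- t ≠ 0 : plain continuity
      apply ContinuousAt.continuousWithinAt
      have hℓca : ContinuousAt ℓ p.1 := by
        have hbase : ContinuousAt (fun t : ℝ => Real.log t + 1) p.1 :=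
          (Real.continuousAt_log hp1).add continuousAt_const
        apply hbase.congr
        filter_upwards [eventually_ne_nhds hp1] with x hx
        simp [hℓ, hx]
      have hDgca : ContinuousAt (fun q : ℝ × E => Dg (θ q)) p :=
        (hDgcont.continuousAt (hU.mem_nhds (hballU (hθV p hp)))).comp hθc.continuousAt
      have hcompca : ContinuousAt (fun q : ℝ × E => (Dg (θ q)).comp e₂) p := by
        have hcl : Continuous fun A : ℝ × ℝ × E →L[ℝ] F => A.comp e₂ :=
          ((ContinuousLinearMap.compL ℝ (ℝ × E) (ℝ × ℝ × E) F).flip e₂).continuous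
        exact hcl.continuousAt.comp hDgca
      exact (hℓca.comp continuous_fst.continuousAt).smul hcompca
  have hLcont : ContinuousOn L V := by
    rw [hLsum]
    exact hG1.add hG2
  have hfderiv_eq : ∀ p ∈ V, fderiv ℝ f p = L p := fun p hp => (hder p hp).fderiv
  refine ⟨V, hVopen, hV0, ?_, ?_⟩
  · rw [show (1 : WithTop ℕ∞) = 0 + 1 by norm_num, contDiffOn_succ_iff_fderiv_of_isOpen hVopen]
    refine ⟨fun p hp => ((hder p hp).differentiableAt).differentiableWithinAt, ?_, ?_⟩
    · intro h0
      simp at h0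
    · rw [contDiffOn_zero]
      exact hLcont.congr hfderiv_eq
  · intro z hz τ ζ
    rw [hfderiv_eq _ hz]
    have hball00 : ((0:ℝ), (0:ℝ), z) ∈ ball w₀ ε := h00V _ hz
    have hgd : HasFDerivAt g (Dg ((0:ℝ), (0:ℝ), z)) ((0:ℝ), (0:ℝ), z) := hdiffat _ hball00
    have hCL : L ((0:ℝ), z) (τ, ζ) = Dg ((0:ℝ), (0:ℝ), z) ((τ, 0, ζ) : ℝ × ℝ × E) := by
      simp only [hL]
      show Dg (0, η 0, z) ((J + ℓ 0 • e₂) (τ, ζ)) = _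
      rw [hη0]
      congr 1
      simp [hℓ, hJapp, he₂app]
    rw [hCL]
    have hcurve : HasDerivAt (fun t : ℝ => ((t, 0, z) : ℝ × ℝ × E)) ((1, 0, 0) : ℝ × ℝ × E) 0 :=
      (hasDerivAt_id 0).prodMk ((hasDerivAt_const 0 (0:ℝ)).prodMk (hasDerivAt_const 0 z))
    have hd1 : HasDerivAt (fun t : ℝ => g (t, 0, z)) (Dg ((0:ℝ), (0:ℝ), z) (1, 0, 0)) 0 :=
      hgd.comp_hasDerivAt 0 hcurve
    rw [hd1.deriv]
    set ι : E →L[ℝ] ℝ × ℝ × E :=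
      (0 : E →L[ℝ] ℝ).prod ((0 : E →L[ℝ] ℝ).prod (ContinuousLinearMap.id ℝ E)) with hι
    have hιd : HasFDerivAt (fun w : E => ((0:ℝ), (0:ℝ), w)) ι z :=
      (hasFDerivAt_const (0:ℝ) z).prodMk ((hasFDerivAt_const (0:ℝ) z).prodMk (hasFDerivAt_id z))
    have hd2 : HasFDerivAt (fun w : E => g (0, 0, w)) ((Dg ((0:ℝ), (0:ℝ), z)).comp ι) z :=
      hgd.comp z hιd
    rw [hd2.fderiv]
    have hιζ : ((Dg ((0:ℝ), (0:ℝ), z)).comp ι) ζ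
        = Dg ((0:ℝ), (0:ℝ), z) (((0:ℝ), (0:ℝ), ζ) : ℝ × ℝ × E) := rfl
    rw [hιζ, ← map_smul, ← map_add]
    congr 1
    simp [Prod.ext_iff]
end

section
/- Let Ω = ℂ ∖ (−∞,0] be the slit plane and fix λ ∈ ℂ∖{0}. Define Φ^S : Ω → M₂(ℂ) by Φ^S(z) = (1/(2·√z))·[[z+1, λ⁻¹(z−1)],[λ(z−1), z+1]], where √z is the principal square root. Then Φ^S(1) = I₂, det Φ^S(z) = 1 for all z ∈ Ω, and Φ^S is holomorphic on Ω with derivative (Φ^S)′(z) = Φ^S(z)·(1/z)·[[0, λ⁻¹/2],[λ/2, 0]] for every z ∈ Ω. (Thus Φ^S solves the Cauchy problem dΦ = Φ·ξ^S, Φ(1) = I₂, for the spherical Delaunay potential ξ^S = [[0, λ⁻¹/2],[λ/2, 0]]·dz/z.) -/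
attribute [local instance] Matrix.linftyOpNormedAddCommGroup Matrix.linftyOpNormedRing
  Matrix.linftyOpNormedAlgebra

set_option maxHeartbeats 1000000 in
theorem stmt12 (lam : ℂ) (hlam : lam ≠ 0)
    (ΦS : ℂ → Matrix (Fin 2) (Fin 2) ℂ)
    (hΦS : ∀ z : ℂ, ΦS z = (1 / (2 * z ^ (1/2 : ℂ))) •
      !![z + 1, lam⁻¹ * (z - 1); lam * (z - 1), z + 1]) :
    ΦS 1 = 1 ∧ (∀ z ∈ Complex.slitPlane, (ΦS z).det = 1) ∧
    ∀ z ∈ Complex.slitPlane,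
      HasDerivAt ΦS (ΦS z * ((1 / z) • !![0, lam⁻¹ / 2; lam / 2, 0])) z := by
  refine ⟨?_, ?_, ?_⟩
  · rw [hΦS, Complex.one_cpow]
    ext i j
    fin_cases i <;> fin_cases j <;>
      simp [Matrix.one_apply] <;> norm_num
  · intro z hz
    have hz0 : z ≠ 0 := Complex.slitPlane_ne_zero hz
    have hs2 : z ^ (1/2 : ℂ) * z ^ (1/2 : ℂ) = z := by
      rw [← Complex.cpow_add _ _ hz0]; norm_num
    have hs0 : z ^ (1/2 : ℂ) ≠ 0 := by
      intro h; apply hz0; rw [← hs2, h, mul_zero]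
    rw [hΦS, Matrix.det_smul, Matrix.det_fin_two_of]
    simp only [Fintype.card_fin]
    generalize hS : z ^ (1/2 : ℂ) = s at hs2 hs0 ⊢
    rw [← hs2]
    field_simp
    ring
  · intro z hz
    have hz0 : z ≠ 0 := Complex.slitPlane_ne_zero hz
    have hs2 : z ^ (1/2 : ℂ) * z ^ (1/2 : ℂ) = z := by
      rw [← Complex.cpow_add _ _ hz0]; norm_num
    have hs0 : z ^ (1/2 : ℂ) ≠ 0 := by
      intro h; apply hz0; rw [← hs2, h, mul_zero]
    have hpow : HasDerivAt (fun w : ℂ => w ^ (1/2 : ℂ))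
        ((1/2 : ℂ) * z ^ ((1/2 : ℂ) - 1)) z :=
      (Complex.hasStrictDerivAt_cpow_const hz).hasDerivAt
    have hg : HasDerivAt (fun w : ℂ => 1 / (2 * w ^ (1/2 : ℂ)))
        (-(2 * ((1/2 : ℂ) * z ^ ((1/2 : ℂ) - 1))) / (2 * z ^ (1/2 : ℂ)) ^ 2) z := by
      simpa only [one_div, Pi.inv_def] using
        (hpow.const_mul (2 : ℂ)).inv (mul_ne_zero two_ne_zero hs0)
    have hfun : (fun w : ℂ => !![w + 1, lam⁻¹ * (w - 1); lam * (w - 1), w + 1]) =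
        fun w => w • !![1, lam⁻¹; lam, 1] + !![1, -lam⁻¹; -lam, 1] := by
      funext w
      ext i j
      fin_cases i <;> fin_cases j <;> simp <;> ring
    have hM : HasDerivAt (fun w : ℂ =>
        !![w + 1, lam⁻¹ * (w - 1); lam * (w - 1), w + 1])
        ((1 : ℂ) • !![1, lam⁻¹; lam, 1]) z := by
      rw [hfun]
      exact ((hasDerivAt_id z).smul_const _).add_const _
    have hcomb := hg.smul hM
    have heq : ΦS = fun w => (1 / (2 * w ^ (1/2 : ℂ))) •
        !![w + 1, lam⁻¹ * (w - 1); lam * (w - 1), w + 1] := funext hΦS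
    rw [heq]
    refine HasDerivAt.congr_deriv hcomb ?_
    have hneg : z ^ ((1/2 : ℂ) - 1) =
        (z ^ (1/2 : ℂ))⁻¹ * (z ^ (1/2 : ℂ))⁻¹ * z ^ (1/2 : ℂ) := by
      have h : ((1:ℂ)/2 - 1) = -(1/2) := by norm_num
      rw [h, Complex.cpow_neg]
      field_simp
    clear hcomb hg hM hpow hfun heq hΦS
    beta_reduce
    rw [hneg]
    generalize hS : z ^ (1/2 : ℂ) = s at hs2 hs0 ⊢
    rw [← hs2]
    ext i j
    fin_cases i <;> fin_cases j <;>
      · simp [Matrix.mul_apply, Fin.sum_univ_two]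
        field_simp
        try ring
        try (simp only [inv_pow]; field_simp; ring)
end

section
/- Let Ω = ℂ ∖ (−∞,0], z ∈ Ω with θ = arg z the principal argument, and λ ∈ ℂ with |λ| = 1. Define F^S(z,λ) = (1/(√2·√(1+|z|²)))·[[conj(z)+1, λ⁻¹(z−1)],[λ(1−conj(z)), z+1]]·[[e^{iθ/2}, 0],[0, e^{−iθ/2}]] and B^S(z,λ) = (1/(√(2|z|)·√(1+|z|²)))·[[2|z|, 0],[λ(|z|²−1), 1+|z|²]]. Then: (i) F^S(z,λ)·B^S(z,λ) = Φ^S(z,λ), where Φ^S(z,λ) = (1/(2·√z))·[[z+1, λ⁻¹(z−1)],[λ(z−1), z+1]] with √z the principal square root; (ii) F^S(z,λ) is unitary with determinant 1 (i.e. F^S(z,λ) ∈ SU(2)); (iii) the diagonal entries of B^S(z,λ) are positive real numbers and its (1,2) entry is 0. (This is the Iwasawa decomposition of Φ^S.) -/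
set_option maxHeartbeats 1000000 in
theorem stmt13 (z lam : ℂ) (hz : z ∈ Complex.slitPlane) (hlam : ‖lam‖ = 1)
    (FS BS ΦS : Matrix (Fin 2) (Fin 2) ℂ)
    (hFS : FS = (((Real.sqrt 2 * Real.sqrt (1 + ‖z‖ ^ 2) : ℝ) : ℂ))⁻¹ •
        (!![starRingEnd ℂ z + 1, lam⁻¹ * (z - 1); lam * (1 - starRingEnd ℂ z), z + 1] *
          !![Complex.exp ((z.arg : ℂ) * Complex.I / 2), 0;
             0, Complex.exp (-((z.arg : ℂ) * Complex.I / 2))]))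
    (hBS : BS = (((Real.sqrt (2 * ‖z‖) * Real.sqrt (1 + ‖z‖ ^ 2) : ℝ) : ℂ))⁻¹ •
        !![((2 * ‖z‖ : ℝ) : ℂ), 0;
           lam * ((‖z‖ ^ 2 - 1 : ℝ) : ℂ), ((1 + ‖z‖ ^ 2 : ℝ) : ℂ)])
    (hΦS : ΦS = (1 / (2 * z ^ (1/2 : ℂ))) •
        !![z + 1, lam⁻¹ * (z - 1); lam * (z - 1), z + 1]) :
    FS * BS = ΦS ∧
    FS ∈ Matrix.unitaryGroup (Fin 2) ℂ ∧ FS.det = 1 ∧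
    (BS 0 0).im = 0 ∧ 0 < (BS 0 0).re ∧ (BS 1 1).im = 0 ∧ 0 < (BS 1 1).re ∧ BS 0 1 = 0 := by
  have hz0 : z ≠ 0 := Complex.slitPlane_ne_zero hz
  have hr : 0 < ‖z‖ := norm_pos_iff.mpr hz0
  have hlam0 : lam ≠ 0 := by intro h; simp [h] at hlam
  have hlamc : lam * starRingEnd ℂ lam = 1 := by
    rw [Complex.mul_conj, ← Complex.sq_norm, hlam]; norm_num
  have hlaminv : lam⁻¹ = starRingEnd ℂ lam := inv_eq_of_mul_eq_one_right hlamc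
  set r : ℝ := ‖z‖ with hrdef
  set E : ℂ := Complex.exp ((z.arg : ℂ) * Complex.I / 2) with hEdef
  have hE0 : E ≠ 0 := Complex.exp_ne_zero _
  have hEneg : Complex.exp (-((z.arg : ℂ) * Complex.I / 2)) = E⁻¹ := by
    rw [hEdef, ← Complex.exp_neg]
  have hEconj : starRingEnd ℂ E = E⁻¹ := by
    rw [hEdef, ← Complex.exp_conj, ← Complex.exp_neg]
    congr 1
    rw [map_div₀, map_mul, Complex.conj_I, Complex.conj_ofReal, map_ofNat]
    ring
  have hE2 : (r : ℂ) * (E * E) = z := by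
    rw [hEdef, ← Complex.exp_add,
      show (z.arg : ℂ) * Complex.I / 2 + (z.arg : ℂ) * Complex.I / 2 = z.arg * Complex.I by ring]
    exact Complex.norm_mul_exp_arg_mul_I z
  have hzc : z * starRingEnd ℂ z = ((r : ℝ) : ℂ) ^ 2 := by
    rw [Complex.mul_conj, ← Complex.sq_norm]; push_cast; ring
  set a : ℝ := Real.sqrt r with hadef
  set b : ℝ := Real.sqrt (1 + r ^ 2) with hbdef
  set s : ℝ := Real.sqrt 2 with hsdef
  have ha0 : 0 < a := Real.sqrt_pos.mpr hr
  have hb0 : 0 < b := Real.sqrt_pos.mpr (by positivity)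
  have hs0 : 0 < s := Real.sqrt_pos.mpr (by norm_num)
  have ha2 : ((a : ℝ) : ℂ) ^ 2 = (r : ℂ) := by
    rw [hadef]; norm_cast; exact Real.sq_sqrt hr.le
  have hb2 : ((b : ℝ) : ℂ) ^ 2 = 1 + (r : ℂ) ^ 2 := by
    rw [hbdef]; norm_cast; rw [Real.sq_sqrt (by positivity)]
  have hs2 : ((s : ℝ) : ℂ) ^ 2 = 2 := by
    rw [hsdef]; norm_cast; rw [Real.sq_sqrt (by norm_num)]
  have hsra : Real.sqrt (2 * r) = s * a := by
    rw [hsdef, hadef, ← Real.sqrt_mul (by norm_num)]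
  have hw : z ^ (1/2 : ℂ) = (a : ℂ) * E := by
    rw [Complex.cpow_def_of_ne_zero hz0, Complex.log]
    rw [show (↑(Real.log ‖z‖) + ↑z.arg * Complex.I) * (1/2 : ℂ)
        = (↑(Real.log ‖z‖ / 2) : ℂ) + ↑z.arg * Complex.I / 2 by push_cast; ring]
    rw [Complex.exp_add, ← Complex.ofReal_exp, hEdef]
    congr 2
    rw [hadef, hrdef, ← Real.log_sqrt (norm_nonneg z),
      Real.exp_log (Real.sqrt_pos.mpr hr)]
  have haC : ((a:ℝ):ℂ) ≠ 0 := by exact_mod_cast ha0.ne'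
  have hbC : ((b:ℝ):ℂ) ≠ 0 := by exact_mod_cast hb0.ne'
  have hsC : ((s:ℝ):ℂ) ≠ 0 := by exact_mod_cast hs0.ne'
  have hw' : z ^ ((2:ℂ)⁻¹) = (a : ℂ) * E := by rw [← hw]; norm_num
  have hwne : ((a:ℂ) * E) ≠ 0 := mul_ne_zero haC hE0
  subst hFS hBS hΦS
  refine ⟨?_, ?_, ?_, ?_, ?_, ?_, ?_, ?_⟩
  · ext i j
    fin_cases i <;> fin_cases j <;>
      simp [Matrix.mul_apply, Fin.sum_univ_two, hEneg, hsra, hlaminv, hw'] <;>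
      field_simp
    all_goals (try rw [div_eq_iff (by simp [hE0, haC, hbC, hsC])])
    · linear_combination (4:ℂ) * hzc +
        (4*((starRingEnd ℂ) z + 1)) * hE2 +
        (2*(z-1)*((r:ℂ)^2-1)) * hlamc +
        (-(s:ℂ)^2*(z+1)) * hb2 +
        (-(z+1)*(1+(r:ℂ)^2)) * hs2
    · linear_combination (-((starRingEnd ℂ) lam * (z - 1) * (s:ℂ)^2)) * hb2 +
        (-((starRingEnd ℂ) lam * (z - 1) * (1 + (r:ℂ)^2))) * hs2
    · linear_combination (-4:ℂ) * hzc +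
        (4*(1 - (starRingEnd ℂ) z)) * hE2 +
        (-(s:ℂ)^2*(z-1)) * hb2 +
        (-(z-1)*(1+(r:ℂ)^2)) * hs2
    · linear_combination (-((z+1) * (s:ℂ)^2)) * hb2 +
        (-((z+1) * (1 + (r:ℂ)^2))) * hs2
  · rw [Matrix.mem_unitaryGroup_iff]
    ext i j
    fin_cases i <;> fin_cases j <;>
      simp [Matrix.mul_apply, Fin.sum_univ_two, Matrix.star_apply, Matrix.one_apply,
        hEneg, hEconj, hlaminv, map_inv₀, Complex.conj_ofReal] <;>
      field_simp
    all_goals (try rw [div_eq_iff (by simp [hE0, hbC, hsC])])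
    · linear_combination ((z-1)*((starRingEnd ℂ) z - 1)) * hlamc +
        (2:ℂ) * hzc + (-(s:ℂ)^2) * hb2 +
        (-(1+(r:ℂ)^2)) * hs2
    · ring
    · ring
    · linear_combination ((1-z)*(1-(starRingEnd ℂ) z)) * hlamc +
        (2:ℂ) * hzc + (-(s:ℂ)^2) * hb2 +
        (-(1+(r:ℂ)^2)) * hs2
  · rw [Matrix.det_smul, Matrix.det_mul, Matrix.det_fin_two_of, Matrix.det_fin_two_of, hEneg,
      hlaminv]
    simp only [Fintype.card_fin]
    field_simp
    push_cast
    linear_combination ((z-1)*((starRingEnd ℂ) z - 1))*hlamc + 2*hzc - (s:ℂ)^2*hb2 - (1+(r:ℂ)^2)*hs2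
  · simp [Matrix.smul_apply, ← Complex.ofReal_inv, ← Complex.ofReal_mul, ← Complex.ofReal_pow]
  · rw [hsra]
    simp [Matrix.smul_apply, ← Complex.ofReal_inv, ← Complex.ofReal_mul]
    exact mul_pos (mul_pos (inv_pos.mpr hb0) (mul_pos (inv_pos.mpr ha0) (inv_pos.mpr hs0)))
      (by linarith)
  · simp [Matrix.smul_apply, ← Complex.ofReal_inv, ← Complex.ofReal_mul, ← Complex.ofReal_pow]
  · rw [hsra]
    simp [Matrix.smul_apply, ← Complex.ofReal_inv, ← Complex.ofReal_mul, ← Complex.ofReal_pow]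
    exact mul_pos (mul_pos (inv_pos.mpr hb0) (mul_pos (inv_pos.mpr ha0) (inv_pos.mpr hs0)))
      (by positivity)
  · simp
end

section
/- Let Ω = ℂ ∖ (−∞,0] and z ∈ Ω with θ = arg z the principal argument. For λ ∈ ℂ∖{0}, define F^S(z,λ) = (1/(√2·√(1+|z|²)))·[[conj(z)+1, λ⁻¹(z−1)],[λ(1−conj(z)), z+1]]·[[e^{iθ/2}, 0],[0, e^{−iθ/2}]]. Then the Sym–Bobenko matrix f^S(z) := −2i·(∂F^S/∂λ)(z,1)·F^S(z,1)⁻¹ equals (−i/(1+|z|²))·[[−|z−1|², 1−|z|² − z + conj(z)],[1−|z|² + z − conj(z), |z−1|²]]; that is, writing f^S(z) = −i·[[−x₃, x₁+i·x₂],[x₁−i·x₂, x₃]], one has (x₁,x₂,x₃) = ((1−|z|²)/(1+|z|²), −2·Im(z)/(1+|z|²), |z−1|²/(1+|z|²)). Moreover, the vector P(z) = Ψ(x₁,x₂,x₃) = (1−x₃, −x₂, −x₁) equals (1/(1+|z|²))·(2·Re(z), 2·Im(z), |z|²−1) ∈ ℝ³, it has Euclidean norm 1, and (P₁(z) + i·P₂(z))/(1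 − P₃(z)) = z; i.e., after the rigid motion Ψ, the Sym–Bobenko immersion of the spherical frame is the inverse stereographic projection of z from the north pole (0,0,1) of the unit sphere. -/
attribute [local instance] Matrix.linftyOpNormedAddCommGroup Matrix.linftyOpNormedRing
  Matrix.linftyOpNormedAlgebra

set_option maxHeartbeats 1000000 in
theorem stmt14 (z : ℂ) (hz : z ∈ Complex.slitPlane)
    (FS : ℂ → Matrix (Fin 2) (Fin 2) ℂ)
    (hFS : ∀ lam : ℂ, FS lam =
      (((Real.sqrt 2 * Real.sqrt (1 + ‖z‖ ^ 2) : ℝ) : ℂ))⁻¹ •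
        (!![starRingEnd ℂ z + 1, lam⁻¹ * (z - 1); lam * (1 - starRingEnd ℂ z), z + 1] *
          !![Complex.exp ((z.arg : ℂ) * Complex.I / 2), 0;
             0, Complex.exp (-((z.arg : ℂ) * Complex.I / 2))]))
    (fS : Matrix (Fin 2) (Fin 2) ℂ)
    (hfS : fS = (-2 * Complex.I) • (deriv FS 1 * (FS 1)⁻¹))
    (x₁ x₂ x₃ : ℝ)
    (hx₁ : x₁ = (1 - ‖z‖ ^ 2) / (1 + ‖z‖ ^ 2))
    (hx₂ : x₂ = -2 * z.im / (1 + ‖z‖ ^ 2))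
    (hx₃ : x₃ = ‖z - 1‖ ^ 2 / (1 + ‖z‖ ^ 2))
    (P : Fin 3 → ℝ) (hP : P = ![1 - x₃, -x₂, -x₁]) :
    fS = (-Complex.I / ((1 + ‖z‖ ^ 2 : ℝ) : ℂ)) •
        !![-((‖z - 1‖ ^ 2 : ℝ) : ℂ),
            ((1 - ‖z‖ ^ 2 : ℝ) : ℂ) - z + starRingEnd ℂ z;
          ((1 - ‖z‖ ^ 2 : ℝ) : ℂ) + z - starRingEnd ℂ z,
            ((‖z - 1‖ ^ 2 : ℝ) : ℂ)] ∧
    fS = (-Complex.I) • !![-(x₃ : ℂ), (x₁ : ℂ) + (x₂ : ℂ) * Complex.I;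
        (x₁ : ℂ) - (x₂ : ℂ) * Complex.I, (x₃ : ℂ)] ∧
    P = ![2 * z.re / (1 + ‖z‖ ^ 2), 2 * z.im / (1 + ‖z‖ ^ 2),
        (‖z‖ ^ 2 - 1) / (1 + ‖z‖ ^ 2)] ∧
    P 0 ^ 2 + P 1 ^ 2 + P 2 ^ 2 = 1 ∧
    (((P 0 : ℝ) : ℂ) + ((P 1 : ℝ) : ℂ) * Complex.I) / (1 - ((P 2 : ℝ) : ℂ)) = z := by
  have hpos : (0:ℝ) < 1 + ‖z‖ ^ 2 := by positivity
  have hne : (1:ℝ) + ‖z‖ ^ 2 ≠ 0 := ne_of_gt hpos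
  have hneC : ((1 + ‖z‖ ^ 2 : ℝ) : ℂ) ≠ 0 := by
    exact_mod_cast (Complex.ofReal_ne_zero.mpr hne)
  set c : ℂ := (((Real.sqrt 2 * Real.sqrt (1 + ‖z‖ ^ 2) : ℝ) : ℂ))⁻¹ with hc
  have hcc : c * c = (((2 * (1 + ‖z‖ ^ 2) : ℝ)) : ℂ)⁻¹ := by
    have h2 : Real.sqrt 2 * Real.sqrt 2 = 2 := Real.mul_self_sqrt (by norm_num)
    have h3 : Real.sqrt (1 + ‖z‖ ^ 2) * Real.sqrt (1 + ‖z‖ ^ 2)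
        = 1 + ‖z‖ ^ 2 := Real.mul_self_sqrt (le_of_lt hpos)
    have hrr : (Real.sqrt 2 * Real.sqrt (1 + ‖z‖ ^ 2)) *
        (Real.sqrt 2 * Real.sqrt (1 + ‖z‖ ^ 2)) = 2 * (1 + ‖z‖ ^ 2) := by
      nlinarith [h2, h3]
    rw [hc, ← mul_inv, ← Complex.ofReal_mul, hrr]
  set E : Matrix (Fin 2) (Fin 2) ℂ :=
    !![Complex.exp ((z.arg:ℂ) * Complex.I / 2), 0; 0, Complex.exp (-((z.arg:ℂ) * Complex.I / 2))] with hE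
  set E' : Matrix (Fin 2) (Fin 2) ℂ :=
    !![Complex.exp (-((z.arg:ℂ) * Complex.I / 2)), 0; 0, Complex.exp ((z.arg:ℂ) * Complex.I / 2)] with hE'
  have hEE' : E * E' = 1 := by
    ext i j
    fin_cases i <;> fin_cases j <;>
      simp [hE, hE', Matrix.mul_apply, Fin.sum_univ_two, ← Complex.exp_add, Matrix.one_apply]
  set A : Matrix (Fin 2) (Fin 2) ℂ :=
    !![starRingEnd ℂ z + 1, z - 1; 1 - starRingEnd ℂ z, z + 1] with hA
  set N : Matrix (Fin 2) (Fin 2) ℂ :=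
    !![z + 1, -(z - 1); -(1 - starRingEnd ℂ z), starRingEnd ℂ z + 1] with hN
  set C' : Matrix (Fin 2) (Fin 2) ℂ :=
    !![0, 1 - z; 1 - starRingEnd ℂ z, 0] with hC'
  have hzz : z * starRingEnd ℂ z = ((‖z‖ : ℝ) : ℂ) ^ 2 := by
    rw [Complex.mul_conj]
    rw [← Complex.sq_norm]
    push_cast
    ring
  have hAN : A * N = (((2 * (1 + ‖z‖ ^ 2) : ℝ)) : ℂ) • 1 := by
    ext i j
    fin_cases i <;> fin_cases j <;>
      · simp [hA, hN, Matrix.mul_apply, Fin.sum_univ_two, Matrix.one_apply]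
        push_cast
        first
        | ring1
        | linear_combination (2:ℂ) * hzz
        | linear_combination (-2:ℂ) * hzz
  -- FS 1
  have hFS1 : FS 1 = c • (A * E) := by
    rw [hFS 1]
    norm_num [hA]
  set G : Matrix (Fin 2) (Fin 2) ℂ := E' * (c • N) with hG
  have hdet : (((2 * (1 + ‖z‖ ^ 2) : ℝ)) : ℂ) ≠ 0 := by
    exact_mod_cast Complex.ofReal_ne_zero.mpr (by positivity)
  have hright : FS 1 * G = 1 := by
    rw [hFS1, hG, Matrix.smul_mul, Matrix.mul_smul, Matrix.mul_smul, smul_smul,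
      mul_assoc, ← mul_assoc E E' N, hEE', one_mul, hAN, smul_smul, hcc,
      inv_mul_cancel₀ hdet, one_smul]
  have hinv : (FS 1)⁻¹ = G := Matrix.inv_eq_right_inv hright
  -- derivative
  set B : Matrix (Fin 2) (Fin 2) ℂ := !![starRingEnd ℂ z + 1, 0; 0, z + 1] with hB
  set Cm : Matrix (Fin 2) (Fin 2) ℂ := !![0, z - 1; 0, 0] with hCm
  set D : Matrix (Fin 2) (Fin 2) ℂ := !![0, 0; 1 - starRingEnd ℂ z, 0] with hD
  have hFS' : FS = fun lam : ℂ => c • ((B + lam⁻¹ • Cm + lam • D) * E) := by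
    funext lam
    rw [hFS lam]
    congr 1
    congr 1
    ext i j
    fin_cases i <;> fin_cases j <;> simp [hB, hCm, hD]
  have hder : HasDerivAt FS (c • (((0 : Matrix (Fin 2) (Fin 2) ℂ) + (-((1:ℂ)^2)⁻¹) • Cm + (1:ℂ) • D) * E)) 1 := by
    rw [hFS']
    exact ((((hasDerivAt_const (1:ℂ) B).add
      ((hasDerivAt_inv one_ne_zero).smul_const Cm)).add
      ((hasDerivAt_id (1:ℂ)).smul_const D)).mul_const E).const_smul c
  have hCmD : ((0 : Matrix (Fin 2) (Fin 2) ℂ) + (-((1:ℂ)^2)⁻¹) • Cm + (1:ℂ) • D) = C' := by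
    ext i j
    fin_cases i <;> fin_cases j <;> simp [hCm, hD, hC'] <;> ring
  have hderiv1 : deriv FS 1 = c • (C' * E) := by
    rw [← hCmD]; exact hder.deriv
  -- fS computation
  have habs1 : ((‖z - 1‖ ^ 2 : ℝ) : ℂ) = (1 - z) * (1 - starRingEnd ℂ z) := by
    rw [Complex.sq_norm, ← Complex.mul_conj]
    simp only [map_sub, map_one]
    ring
  have hfS' : fS = (-Complex.I / ((1 + ‖z‖ ^ 2 : ℝ) : ℂ)) •
      !![-((‖z - 1‖ ^ 2 : ℝ) : ℂ),
          ((1 - ‖z‖ ^ 2 : ℝ) : ℂ) - z + starRingEnd ℂ z;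
        ((1 - ‖z‖ ^ 2 : ℝ) : ℂ) + z - starRingEnd ℂ z,
          ((‖z - 1‖ ^ 2 : ℝ) : ℂ)] := by
    rw [hfS, hderiv1, hinv, hG]
    have hs : (-2 * Complex.I) * (((2 * (1 + ‖z‖ ^ 2) : ℝ)) : ℂ)⁻¹
        = -Complex.I / ((1 + ‖z‖ ^ 2 : ℝ) : ℂ) := by
      rw [div_eq_mul_inv]
      push_cast
      rw [show (2 : ℂ) * (1 + (‖z‖ : ℂ) ^ 2) = 2 * (1 + (‖z‖ : ℂ) ^ 2) from rfl]
      have h2 : (1 + (‖z‖ : ℂ) ^ 2) ≠ 0 := by push_cast at hneC; exact hneC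
      field_simp
    rw [Matrix.smul_mul, Matrix.mul_smul, Matrix.mul_smul, smul_smul, smul_smul,
      mul_assoc C' E (E' * N), ← mul_assoc E E' N, hEE', one_mul,
      mul_assoc (-2 * Complex.I) c c, hcc, hs]
    congr 1
    have habs1' := habs1
    push_cast at habs1'
    ext i j
    fin_cases i <;> fin_cases j <;>
      · simp [hC', hN, Matrix.mul_apply, Fin.sum_univ_two]
        push_cast
        first
        | ring1
        | linear_combination hzz
        | linear_combination -hzz
        | linear_combination habs1'
        | linear_combination -habs1'
        | linear_combination habs1' + hzz
        | linear_combination habs1' - hzz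
        | linear_combination -habs1' + hzz
        | linear_combination -habs1' - hzz
  have hsub := Complex.sub_conj z
  push_cast at hsub
  have hre1 : ‖z - 1‖ ^ 2 = (z.re - 1) ^ 2 + z.im ^ 2 := by
    rw [Complex.sq_norm, Complex.normSq_apply]
    simp [Complex.sub_re, Complex.sub_im]
    ring
  have hre2 : ‖z‖ ^ 2 = z.re ^ 2 + z.im ^ 2 := by
    rw [Complex.sq_norm, Complex.normSq_apply]
    ring
  have hP3 : P = ![2 * z.re / (1 + ‖z‖ ^ 2), 2 * z.im / (1 + ‖z‖ ^ 2),
      (‖z‖ ^ 2 - 1) / (1 + ‖z‖ ^ 2)] := by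
    rw [hP, hx₁, hx₂, hx₃]
    ext i
    fin_cases i <;> simp <;> field_simp <;>
        first
        | ring1
        | linear_combination hre1
        | linear_combination -hre1
        | linear_combination hre2
        | linear_combination -hre2
        | linear_combination hre1 - 2 * hre2
        | linear_combination -hre1 + 2 * hre2
        | linear_combination hre1 + 2 * hre2
        | linear_combination -hre1 - 2 * hre2
        | linear_combination hre1 - hre2
        | linear_combination -hre1 + hre2
        | linear_combination hre1 + hre2
        | linear_combination -hre1 - hre2
  refine ⟨hfS', ?_, hP3, ?_, ?_⟩
  · rw [hfS', hx₁, hx₂, hx₃]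
    have h2c : (1 + (‖z‖ : ℂ) ^ 2) ≠ 0 := by push_cast at hneC; exact hneC
    ext i j
    fin_cases i <;> fin_cases j <;> simp [Matrix.smul_apply] <;> push_cast <;> field_simp <;>
      first
      | ring1
      | (left; first
          | linear_combination hsub
          | linear_combination -hsub)
      | linear_combination hsub
      | linear_combination -hsub
  · rw [hP3]
    simp
    field_simp
    linear_combination (-4 : ℝ) * hre2
  · rw [hP3]
    simp
    push_cast
    have h2 : (1 + (‖z‖ : ℂ) ^ 2) ≠ 0 := by push_cast at hneC; exact hneC
    have hri := Complex.re_add_im z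
    field_simp
    first
    | ring1
    | linear_combination 2 * hri
    | linear_combination -2 * hri
    | linear_combination hri
    | linear_combination -hri
    | linear_combination (1 + (‖z‖ : ℂ) ^ 2) * hri
    | linear_combination 2 * (1 + (‖z‖ : ℂ) ^ 2) * hri
end

section
/- Let Ω = ℂ ∖ (−∞,0] and λ ∈ ℂ∖{0}. Define on Ω the matrix-valued functions ξ^S(z) = (1/z)·[[0, λ⁻¹/2],[λ/2, 0]] and G^S(z) = [[(1+z)/√z, 0],[λ(1−z)/√z, √z/(1+z)]], with √z the principal square root. Then for every z ∈ Ω, G^S(z)⁻¹·ξ^S(z)·G^S(z) + G^S(z)⁻¹·(G^S)′(z) = (1/(2(z+1)²))·[[0, λ⁻¹],[0, 0]], where (G^S)′ is the entrywise complex derivative. In particular the gauged potential ξ^S·G^S extends holomorphically across z = 0, so the pole of the spherical Delaunay potential at 0 is an apparent singularity. -/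
set_option maxHeartbeats 1000000


attribute [local instance] Matrix.linftyOpNormedAddCommGroup Matrix.linftyOpNormedRing
  Matrix.linftyOpNormedAlgebra

theorem stmt15 (lam : ℂ) (hlam : lam ≠ 0)
    (ξS GS : ℂ → Matrix (Fin 2) (Fin 2) ℂ)
    (hξS : ∀ z : ℂ, ξS z = (1 / z) • !![0, lam⁻¹ / 2; lam / 2, 0])
    (hGS : ∀ z : ℂ, GS z = !![(1 + z) / z ^ (1/2 : ℂ), 0;
        lam * (1 - z) / z ^ (1/2 : ℂ), z ^ (1/2 : ℂ) / (1 + z)]) :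
    ∀ z ∈ Complex.slitPlane,
      (GS z)⁻¹ * ξS z * GS z + (GS z)⁻¹ * deriv GS z
        = (1 / (2 * (z + 1) ^ 2)) • !![0, lam⁻¹; 0, 0] := by
  intro z hz
  have hz0 : z ≠ 0 := Complex.slitPlane_ne_zero hz
  have hz1 : (1 : ℂ) + z ≠ 0 := by
    intro h
    have hzz : z = -1 := by linear_combination h
    rw [hzz] at hz
    simp [Complex.mem_slitPlane_iff] at hz
    norm_num at hz
  obtain ⟨s, hs⟩ : ∃ s : ℂ, s = z ^ (1/2 : ℂ) := ⟨_, rfl⟩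
  have hs0 : s ≠ 0 := by
    simp only [hs]
    exact fun h => hz0 (Complex.cpow_eq_zero_iff z _ |>.mp h).1
  have hss : s * s = z := by
    rw [hs, ← Complex.cpow_add _ _ hz0]
    norm_num
  have hs0' : z ^ (1/2 : ℂ) ≠ 0 := by rw [← hs]; exact hs0
  have hsd' : HasDerivAt (fun w : ℂ => w ^ (1/2 : ℂ)) ((1/2 : ℂ) * (z ^ (1/2 : ℂ))⁻¹) z := by
    have h := HasDerivAt.cpow_const (c := (1/2 : ℂ)) (hasDerivAt_id z) hz
    have hval : (1/2 : ℂ) * z ^ ((1:ℂ)/2 - 1) * 1 = (1/2 : ℂ) * (z ^ (1/2 : ℂ))⁻¹ := by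
      rw [show ((1:ℂ)/2 - 1) = -(1/2 : ℂ) by norm_num, Complex.cpow_neg]
      ring
    rw [← hval]; exact h
  have hden : HasDerivAt (fun w : ℂ => 1 + w) 1 z := by
    exact (hasDerivAt_id z).const_add (1:ℂ)
  have hf := HasDerivAt.div hden hsd' hs0'
  have hnum : HasDerivAt (fun w : ℂ => lam * (1 - w)) (-lam) z := by
    have := ((hasDerivAt_const z (1:ℂ)).sub (hasDerivAt_id z)).const_mul lam
    simpa using this
  have hg := HasDerivAt.div hnum hsd' hs0'
  have hh := HasDerivAt.div hsd' hden hz1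
  rw [← hs] at hf hg hh
  -- matrix derivative
  obtain ⟨f', hf'⟩ : ∃ w : ℂ, w = (1 * s - (1 + z) * ((1/2 : ℂ) * s⁻¹)) / s ^ 2 := ⟨_, rfl⟩
  obtain ⟨g', hg'⟩ : ∃ w : ℂ, w = (-lam * s - lam * (1 - z) * ((1/2 : ℂ) * s⁻¹)) / s ^ 2 := ⟨_, rfl⟩
  obtain ⟨h', hh'⟩ : ∃ w : ℂ, w = ((1/2 : ℂ) * s⁻¹ * (1 + z) - s * 1) / (1 + z) ^ 2 := ⟨_, rfl⟩
  rw [← hf'] at hf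
  rw [← hg'] at hg
  rw [← hh'] at hh
  have hGeq : GS = fun w : ℂ =>
      ((1 + w) / w ^ (1/2 : ℂ)) • !![(1:ℂ), 0; 0, 0]
      + ((lam * (1 - w) / w ^ (1/2 : ℂ)) • !![(0:ℂ), 0; 1, 0]
      + (w ^ (1/2 : ℂ) / (1 + w)) • !![(0:ℂ), 0; 0, 1]) := by
    funext w
    rw [hGS w]
    ext i j
    fin_cases i <;> fin_cases j <;> simp [Matrix.smul_apply]
  have hDG : HasDerivAt GS
      (f' • !![(1:ℂ), 0; 0, 0] + (g' • !![(0:ℂ), 0; 1, 0] + h' • !![(0:ℂ), 0; 0, 1])) z := by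
    rw [hGeq]
    exact (hf.smul_const _).add ((hg.smul_const _).add (hh.smul_const _))
  have hderiv : deriv GS z
      = f' • !![(1:ℂ), 0; 0, 0] + (g' • !![(0:ℂ), 0; 1, 0] + h' • !![(0:ℂ), 0; 0, 1]) :=
    hDG.deriv
  -- inverse of GS z
  have hinv : (GS z)⁻¹ = !![s / (1 + z), 0; -(lam * (1 - z)) / s, (1 + z) / s] := by
    apply Matrix.inv_eq_left_inv
    rw [hGS z, ← hs]
    ext i j
    fin_cases i <;> fin_cases j <;>
      simp [Matrix.mul_apply, Fin.sum_univ_two] <;> field_simp <;> ring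
  have hz1' : (1 : ℂ) + s * s ≠ 0 := by rw [hss]; exact hz1
  have hz1'' : s * s + 1 ≠ 0 := by rw [hss]; intro h; exact hz1 (by linear_combination h)
  have h1s : (1 : ℂ) + s ^ 2 ≠ 0 := by rwa [sq]
  have hc1 : s ^ 3 * lam * 2 + s ^ 5 * lam * 2 ≠ 0 := by
    have h : s ^ 3 * lam * 2 + s ^ 5 * lam * 2 = 2 * lam * s ^ 3 * ((1:ℂ) + s ^ 2) := by ring
    rw [h]
    exact mul_ne_zero (mul_ne_zero (mul_ne_zero two_ne_zero hlam) (pow_ne_zero _ hs0)) h1s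
  have hc2 : s ^ 2 * lam * 2 + s ^ 4 * lam * 4 + s ^ 6 * lam * 2 ≠ 0 := by
    have h : s ^ 2 * lam * 2 + s ^ 4 * lam * 4 + s ^ 6 * lam * 2
        = 2 * lam * s ^ 2 * ((1:ℂ) + s ^ 2) ^ 2 := by ring
    rw [h]
    exact mul_ne_zero (mul_ne_zero (mul_ne_zero two_ne_zero hlam) (pow_ne_zero _ hs0))
      (pow_ne_zero _ h1s)
  have hc4 : lam * s ^ 3 * 2 + lam * s ^ 5 * 2 ≠ 0 := by
    have h : lam * s ^ 3 * 2 + lam * s ^ 5 * 2 = s ^ 3 * lam * 2 + s ^ 5 * lam * 2 := by ring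
    rw [h]; exact hc1
  rw [hinv, hξS z, hGS z, hderiv, ← hs, hf', hg', hh', ← hss]
  have m0 : s * s * (lam * 2) ≠ 0 :=
    mul_ne_zero (mul_ne_zero hs0 hs0) (mul_ne_zero hlam two_ne_zero)
  have n1 : (1 + s * s) * (s * s * (lam * 2)) * s ≠ 0 :=
    mul_ne_zero (mul_ne_zero hz1' m0) hs0
  have n2 : (1 + s * s) * (s * s * (lam * 2)) * (1 + s * s) ≠ 0 :=
    mul_ne_zero (mul_ne_zero hz1' m0) hz1'
  have n3a : s * (s * s * 2) * s ≠ 0 :=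
    mul_ne_zero (mul_ne_zero hs0 (mul_ne_zero (mul_ne_zero hs0 hs0) two_ne_zero)) hs0
  have n3b : s * (s * s * (lam * 2)) * s ≠ 0 :=
    mul_ne_zero (mul_ne_zero hs0 m0) hs0
  have hu : s * (2 * s * s ^ 2) ≠ 0 :=
    mul_ne_zero hs0 (mul_ne_zero (mul_ne_zero two_ne_zero hs0) (pow_ne_zero _ hs0))
  have n3c : s * (2 * s * s ^ 2) * (s * (2 * s * s ^ 2)) ≠ 0 := mul_ne_zero hu hu
  have n4 : s * (s * s * (lam * 2)) * (1 + s * s) ≠ 0 :=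
    mul_ne_zero (mul_ne_zero hs0 m0) hz1'
  ext i j
  fin_cases i <;> fin_cases j
  · simp only [Fin.isValue, Matrix.cons_val', Matrix.cons_val_zero, Matrix.empty_val',
      Matrix.cons_val_fin_one]
    simp [Matrix.mul_apply, Fin.sum_univ_two, Matrix.smul_apply]
    field_simp [hs0, hz1', hz1'', hlam]
    ring
  · simp [Matrix.mul_apply, Fin.sum_univ_two, Matrix.smul_apply]
    field_simp [hs0, hz1', hz1'', hlam]
    have hD : (1 + s ^ 2 * 2 + s ^ 4 : ℂ) ≠ 0 := by
      have := pow_ne_zero 2 h1s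
      rwa [show ((1:ℂ) + s ^ 2) ^ 2 = 1 + s ^ 2 * 2 + s ^ 4 by ring] at this
    linear_combination -(mul_inv_cancel₀ hD)
  · simp [Matrix.mul_apply, Fin.sum_univ_two, Matrix.smul_apply]
    field_simp [hs0, hz1', hz1'', hlam]
    ring
  · simp [Matrix.mul_apply, Fin.sum_univ_two, Matrix.smul_apply]
    field_simp [hs0, hz1', hz1'', hlam]
    ring
end

section
/- Let Ω = ℂ ∖ (−∞,0] be the slit plane. Define Φ^C : Ω → M₂(ℂ) by Φ^C(z) = (1/(2·√z))·[[z+1, z−1],[z−1, z+1]], where √z is the principal square root. Then Φ^C(1) = I₂, det Φ^C(z) = 1 for all z ∈ Ω, and Φ^C is holomorphic on Ω with derivative (Φ^C)′(z) = Φ^C(z)·(1/z)·[[0, 1/2],[1/2, 0]] for every z ∈ Ω. (Thus Φ^C solves the Cauchy problem dΦ = Φ·ξ^C, Φ(1) = I₂, for the catenoidal Delaunay potential ξ^C = [[0, 1/2],[1/2, 0]]·dz/z.) -/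
attribute [local instance] Matrix.linftyOpNormedAddCommGroup Matrix.linftyOpNormedRing
  Matrix.linftyOpNormedAlgebra

theorem stmt16 (ΦC : ℂ → Matrix (Fin 2) (Fin 2) ℂ)
    (hΦC : ∀ z : ℂ, ΦC z = (1 / (2 * z ^ (1/2 : ℂ))) •
      !![z + 1, z - 1; z - 1, z + 1]) :
    ΦC 1 = 1 ∧ (∀ z ∈ Complex.slitPlane, (ΦC z).det = 1) ∧
    ∀ z ∈ Complex.slitPlane,
      HasDerivAt ΦC (ΦC z * ((1 / z) • !![0, (1:ℂ) / 2; 1 / 2, 0])) z := by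
  obtain rfl : ΦC = fun z : ℂ => (1 / (2 * z ^ (1/2 : ℂ))) •
      !![z + 1, z - 1; z - 1, z + 1] := funext hΦC
  refine ⟨?_, ?_, ?_⟩
  · ext i j
    fin_cases i <;> fin_cases j <;>
      simp [Complex.one_cpow, Matrix.one_apply] <;> norm_num
  · intro z hz
    have hz0 : z ≠ 0 := Complex.slitPlane_ne_zero hz
    have hss : z ^ (1/2:ℂ) * z ^ (1/2:ℂ) = z := by
      rw [← Complex.cpow_add _ _ hz0]; norm_num
    have hs : z ^ (1/2:ℂ) ≠ 0 := fun h => hz0 (by rw [← hss, h, mul_zero])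
    simp only [Matrix.det_fin_two, Matrix.smul_apply, Matrix.cons_val', Matrix.cons_val_zero,
      Matrix.cons_val_one, Matrix.head_cons, Matrix.head_fin_const, Matrix.empty_val',
      Matrix.cons_val_fin_one, smul_eq_mul, Matrix.of_apply]
    generalize hgen : z ^ (1/2:ℂ) = s at hss hs ⊢
    subst hss
    field_simp
    ring
  · intro z hz
    have hz0 : z ≠ 0 := Complex.slitPlane_ne_zero hz
    have hss : z ^ (1/2:ℂ) * z ^ (1/2:ℂ) = z := by
      rw [← Complex.cpow_add _ _ hz0]; norm_num
    have hs : z ^ (1/2:ℂ) ≠ 0 := fun h => hz0 (by rw [← hss, h, mul_zero])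
    have hds : HasDerivAt (fun w : ℂ => w ^ (1/2:ℂ)) ((1/2) * (z ^ (1/2:ℂ))⁻¹) z := by
      have := (Complex.hasStrictDerivAt_cpow_const (c := (1/2:ℂ)) hz).hasDerivAt
      have he : ((1/2:ℂ) - 1) = -(1/2) := by norm_num
      rwa [he, Complex.cpow_neg] at this
    have ha : HasDerivAt (fun w : ℂ => (w + 1) / (2 * w ^ (1/2:ℂ)))
        ((1 * (2 * z ^ (1/2:ℂ)) - (z + 1) * (2 * ((1/2) * (z ^ (1/2:ℂ))⁻¹))) /
          (2 * z ^ (1/2:ℂ)) ^ 2) z :=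
      ((hasDerivAt_id z).add_const 1).div (hds.const_mul 2)
        (by simpa using hs)
    have hb : HasDerivAt (fun w : ℂ => (w - 1) / (2 * w ^ (1/2:ℂ)))
        ((1 * (2 * z ^ (1/2:ℂ)) - (z - 1) * (2 * ((1/2) * (z ^ (1/2:ℂ))⁻¹))) /
          (2 * z ^ (1/2:ℂ)) ^ 2) z :=
      ((hasDerivAt_id z).sub_const 1).div (hds.const_mul 2)
        (by simpa using hs)
    have key := (ha.smul_const (1 : Matrix (Fin 2) (Fin 2) ℂ)).add
      (hb.smul_const (!![0, (1:ℂ); 1, 0]))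
    have hfun : (fun z : ℂ => (1 / (2 * z ^ (1/2 : ℂ))) •
        !![z + 1, z - 1; z - 1, z + 1]) =
        fun w : ℂ => ((w + 1) / (2 * w ^ (1/2:ℂ))) • (1 : Matrix (Fin 2) (Fin 2) ℂ) +
          ((w - 1) / (2 * w ^ (1/2:ℂ))) • !![0, (1:ℂ); 1, 0] := by
      funext w
      ext i j
      fin_cases i <;> fin_cases j <;>
        simp [Matrix.one_apply, div_eq_mul_inv] <;> ring
    rw [hfun]
    convert key using 1
    case e'_4 => rfl
    case e'_5 => rfl
    case e'_6 => rfl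
    case e'_8 => rfl
    ext i j
    fin_cases i <;> fin_cases j <;>
      · simp [Matrix.mul_apply, Fin.sum_univ_two, Matrix.one_apply]
        generalize hgen : z ^ (1/2:ℂ) = s at hss hs ⊢
        subst hss
        have hgen2 : (s * s) ^ ((2:ℂ))⁻¹ = s := by
          rw [(by norm_num : ((2:ℂ))⁻¹ = 1/2)]; exact hgen
        rw [hgen2]
        field_simp
        ring
end
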